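/- Every Boolean function f: Bool^n → Bool can be represented by an implicative normal form: there exist a natural number k ≤ n and monotone Boolean functions P_0, P_1, …, P_k: Bool^n → Bool such that for all x ∈ Bool^n, f(x) = ((…((P_k(x) → P_{k−1}(x)) → P_{k−2}(x)) → … ) → P_1(x)) → P_0(x), i.e. f equals the left-nested chain of implications P_k → P_{k−1} → … → P_0 of monotone Boolean functions. -/
import Mathlib


/-- Boolean implication `a → b = ¬a ∨ b`. -/
def bimp (a b : Bool) : Bool := !a || b

/-- The left-nested implication chain
`((…((P_k → P_{k−1}) → P_{k−2}) → …) → P_1) → P_0`,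
where `P : Fin (k+1) → Bool` with `P i` playing the role of `P_i`. -/
def impChain : (k : ℕ) → (Fin (k + 1) → Bool) → Bool
  | 0, P => P 0
  | k + 1, P => bimp (impChain k fun i => P i.succ) (P 0)

lemma impChain_true (k : ℕ) : impChain k (fun _ => true) = true := by
  induction k with
  | zero => rfl
  | succ k ih => simp [impChain, ih, bimp]

lemma impChain_step (k j : ℕ) (hj : j ≤ k) (c : Bool) :
    impChain k (fun i => if j < i.val then true else if i.val = j then c else false)
      = (c ^^ decide (j % 2 = 1)) := by
  induction k generalizing j with
  | zero =>
    interval_cases j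
    simp [impChain]
  | succ k ih =>
    cases j with
    | zero =>
      have h : (fun i : Fin (k+1) =>
          if (0:ℕ) < (Fin.succ i).val then true else if (Fin.succ i).val = 0 then c else false)
          = fun _ => true := by
        funext i; simp
      simp only [impChain, h, impChain_true]
      simp [bimp]
    | succ j' =>
      have h : (fun i : Fin (k+1) =>
          if j'+1 < (Fin.succ i).val then true else if (Fin.succ i).val = j'+1 then c else false)
          = fun i : Fin (k+1) => if j' < i.val then true else if i.val = j' then c else false := by
        funext i
        rcases lt_trichotomy j' i.val with h|h|h <;> simp [Fin.val_succ, h] <;> omega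
      simp only [impChain, h, ih j' (by omega)]
      have h0 : (if j'+1 < (0:Fin (k+2)).val then true else if (0:Fin (k+2)).val = j'+1 then c else false) = false := by
        simp
      rw [h0]
      rcases Nat.mod_two_eq_zero_or_one j' with hp | hp <;>
        simp [bimp, Nat.add_mod, hp] <;> cases c <;> rfl

def wt (n : ℕ) (x : Fin n → Bool) : ℕ := (Finset.univ.filter fun j => x j = true).card

lemma wt_le (n : ℕ) (x : Fin n → Bool) : wt n x ≤ n := by
  simpa [wt] using (Finset.card_filter_le Finset.univ fun j => x j = true)

lemma wt_mono (n : ℕ) {x y : Fin n → Bool} (h : x ≤ y) : wt n x ≤ wt n y := by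
  apply Finset.card_le_card
  intro j hj
  simp only [Finset.mem_filter, Finset.mem_univ, true_and] at *
  have := h j
  rw [hj] at this
  exact Bool.eq_true_of_true_le this

lemma eq_of_le_of_wt_eq (n : ℕ) {x y : Fin n → Bool} (h : x ≤ y) (hw : wt n x = wt n y) :
    x = y := by
  have hsub : (Finset.univ.filter fun j => x j = true) ⊆ (Finset.univ.filter fun j => y j = true) := by
    intro j hj
    simp only [Finset.mem_filter, Finset.mem_univ, true_and] at *
    have := h j
    rw [hj] at this
    exact Bool.eq_true_of_true_le this
  have heq := Finset.eq_of_subset_of_card_le hsub (le_of_eq hw.symm)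
  funext j
  have : (j ∈ Finset.univ.filter fun j => x j = true) ↔ (j ∈ Finset.univ.filter fun j => y j = true) := by
    rw [heq]
  simp only [Finset.mem_filter, Finset.mem_univ, true_and] at this
  cases hx : x j <;> cases hy : y j <;> simp_all

/-- Corollary: every Boolean function `f : Bool^n → Bool` has an implicative
normal form `f = P_k → P_{k−1} → … → P_0` (associated to the left) with `k ≤ n`
and all `Pᵢ` monotone Boolean functions. -/
theorem implicative_normal_form
    (n : ℕ) (f : (Fin n → Bool) → Bool) :
    ∃ k ≤ n, ∃ P : Fin (k + 1) → (Fin n → Bool) → Bool,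
      (∀ i, Monotone (P i)) ∧
        ∀ x : Fin n → Bool, f x = impChain k (fun i => P i x) := by
  set c : (Fin n → Bool) → Bool := fun x => f x ^^ decide ((n - wt n x) % 2 = 1) with hc
  refine ⟨n, le_refl n, fun i x =>
    if n < wt n x + i.val then true else if wt n x + i.val = n then c x else false, ?_, ?_⟩
  · intro i x y hxy
    dsimp only
    by_cases h1 : n < wt n x + i.val
    · have : n < wt n y + i.val := by have := wt_mono n hxy; omega
      simp [h1, this]
    · by_cases h2 : wt n x + i.val = n
      · rcases lt_or_eq_of_le (wt_mono n hxy) with hlt | heq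
        · have : n < wt n y + i.val := by omega
          simp [h1, h2, this]
        · rw [eq_of_le_of_wt_eq n hxy heq]
      · simp [h1, h2]
  · intro x
    have hle := wt_le n x
    have hkey : (fun i : Fin (n+1) =>
        if n < wt n x + i.val then true else if wt n x + i.val = n then c x else false)
        = fun i : Fin (n+1) => if (n - wt n x) < i.val then true
            else if i.val = n - wt n x then c x else false := by
      funext i
      have h1 : (n < wt n x + i.val) ↔ ((n - wt n x) < i.val) := by omega
      have h2 : (wt n x + i.val = n) ↔ (i.val = n - wt n x) := by omega
      simp only [h1, h2]
    rw [hkey, impChain_step n (n - wt n x) (by omega) (c x)]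
    simp [hc, Bool.xor_assoc]
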